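/- arXiv:2211.00494 — 3 statements merged into one kernel-verified Lean document; each statement's English description precedes it below -/
import Mathlib

section
/- Every line through two distinct inflection points of the Fermat cubic x^3+y^3+z^3=0 contains exactly three inflection points. -/
noncomputable section

/-- The complex projective plane. -/
abbrev P2 := Projectivization ℂ (Fin 3 → ℂ)

/-- `P` is an inflection point of the Fermat cubic: it lies on `x³+y³+z³ = 0`
and on its Hessian `xyz = 0`. -/
def IsFlex (P : P2) : Prop :=
  P.rep 0 ^ 3 + P.rep 1 ^ 3 + P.rep 2 ^ 3 = 0 ∧ P.rep 0 * P.rep 1 * P.rep 2 = 0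

/-- `P` lies on the projective line with coefficient vector `l`. -/
def OnLine (P : P2) (l : Fin 3 → ℂ) : Prop :=
  l 0 * P.rep 0 + l 1 * P.rep 1 + l 2 * P.rep 2 = 0

namespace FlexAux

open Projectivization

/-- A primitive cube root of unity. -/
def ζ : ℂ := ⟨-1/2, Real.sqrt 3 / 2⟩

lemma hζ : ζ ^ 2 + ζ + 1 = 0 := by
  have h3 : Real.sqrt 3 * Real.sqrt 3 = 3 := Real.mul_self_sqrt (by norm_num)
  apply Complex.ext <;>
    simp [ζ, pow_two, Complex.add_re, Complex.add_im, Complex.mul_re, Complex.mul_im] <;>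
    nlinarith [h3]

lemma ζ_ne_one : ζ ≠ 1 := by
  intro h
  have hz := hζ
  rw [h] at hz
  have : (3 : ℂ) = 0 := by linear_combination hz
  norm_num at this

lemma ζ_sq_ne_one : ζ ^ 2 ≠ 1 := by
  intro h
  have hz : ζ = -2 := by linear_combination hζ - h
  rw [hz] at h
  norm_num at h

lemma ζ_ne_ζ_sq : ζ ≠ ζ ^ 2 := by
  intro h
  have hz : ζ = -(1/2) := by linear_combination (hζ + h) / 2
  rw [hz] at h
  norm_num at h

lemma ζ_cube : ζ ^ 3 = 1 := by linear_combination (ζ - 1) * hζ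

lemma ζ_sq_cube : (ζ ^ 2) ^ 3 = 1 := by linear_combination (ζ ^ 3 + 1) * ζ_cube

lemma cube_roots (e : ℂ) : e ^ 3 = 1 ↔ e = 1 ∨ e = ζ ∨ e = ζ ^ 2 := by
  constructor
  · intro h
    have key : (e - 1) * ((e - ζ) * (e - ζ ^ 2)) = 0 := by
      linear_combination h + (-e ^ 2 + ζ * e - ζ + 1) * hζ
    rcases mul_eq_zero.1 key with h1 | h2
    · left; exact sub_eq_zero.1 h1
    · rcases mul_eq_zero.1 h2 with h3 | h4
      · right; left; exact sub_eq_zero.1 h3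
      · right; right; exact sub_eq_zero.1 h4
  · rintro (rfl | rfl | rfl)
    · norm_num
    · exact ζ_cube
    · exact ζ_sq_cube

lemma cube_ne_zero {c : ℂ} (hc : c ^ 3 = 1) : c ≠ 0 := by
  intro h
  rw [h] at hc
  norm_num at hc

/-- The flex `(1 : -c : 0)`. -/
def A (c : ℂ) : P2 :=
  Projectivization.mk ℂ ![1, -c, 0] (by
    intro h
    have := congrFun h 0
    simp at this)

/-- The flex `(1 : 0 : -c)`. -/
def B (c : ℂ) : P2 :=
  Projectivization.mk ℂ ![1, 0, -c] (by
    intro h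
    have := congrFun h 0
    simp at this)

/-- The flex `(0 : 1 : -c)`. -/
def C (c : ℂ) : P2 :=
  Projectivization.mk ℂ ![0, 1, -c] (by
    intro h
    have := congrFun h 1
    simp at this)

lemma isFlex_mk (v : Fin 3 → ℂ) (hv : v ≠ 0) :
    IsFlex (Projectivization.mk ℂ v hv) ↔
      v 0 ^ 3 + v 1 ^ 3 + v 2 ^ 3 = 0 ∧ v 0 * v 1 * v 2 = 0 := by
  obtain ⟨a, ha⟩ := Projectivization.exists_smul_eq_mk_rep ℂ v hv
  have ha0 : (a : ℂ) ≠ 0 := a.ne_zero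
  unfold IsFlex
  rw [← ha]
  simp only [Pi.smul_apply, Units.smul_def, smul_eq_mul]
  constructor
  · rintro ⟨h1, h2⟩
    constructor
    · have h : (a : ℂ) ^ 3 * (v 0 ^ 3 + v 1 ^ 3 + v 2 ^ 3) = 0 := by linear_combination h1
      exact (mul_eq_zero.1 h).resolve_left (pow_ne_zero 3 ha0)
    · have h : (a : ℂ) ^ 3 * (v 0 * v 1 * v 2) = 0 := by linear_combination h2
      exact (mul_eq_zero.1 h).resolve_left (pow_ne_zero 3 ha0)
  · rintro ⟨h1, h2⟩
    constructor
    · linear_combination (a : ℂ) ^ 3 * h1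
    · linear_combination (a : ℂ) ^ 3 * h2

lemma onLine_mk (v : Fin 3 → ℂ) (hv : v ≠ 0) (l : Fin 3 → ℂ) :
    OnLine (Projectivization.mk ℂ v hv) l ↔
      l 0 * v 0 + l 1 * v 1 + l 2 * v 2 = 0 := by
  obtain ⟨a, ha⟩ := Projectivization.exists_smul_eq_mk_rep ℂ v hv
  have ha0 : (a : ℂ) ≠ 0 := a.ne_zero
  unfold OnLine
  rw [← ha]
  simp only [Pi.smul_apply, Units.smul_def, smul_eq_mul]
  constructor
  · intro h
    have h' : (a : ℂ) * (l 0 * v 0 + l 1 * v 1 + l 2 * v 2) = 0 := by linear_combination h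
    exact (mul_eq_zero.1 h').resolve_left ha0
  · intro h
    linear_combination (a : ℂ) * h

lemma onLine_A (c : ℂ) (l : Fin 3 → ℂ) : OnLine (A c) l ↔ l 0 - c * l 1 = 0 := by
  unfold A
  rw [onLine_mk]
  constructor <;> intro h <;> · simp only [Matrix.cons_val_zero, Matrix.cons_val_one,
    Matrix.head_cons, Matrix.cons_val_two, Matrix.tail_cons] at * ; linear_combination h

lemma onLine_B (c : ℂ) (l : Fin 3 → ℂ) : OnLine (B c) l ↔ l 0 - c * l 2 = 0 := by
  unfold B
  rw [onLine_mk]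
  constructor <;> intro h <;> · simp only [Matrix.cons_val_zero, Matrix.cons_val_one,
    Matrix.head_cons, Matrix.cons_val_two, Matrix.tail_cons] at * ; linear_combination h

lemma onLine_C (c : ℂ) (l : Fin 3 → ℂ) : OnLine (C c) l ↔ l 1 - c * l 2 = 0 := by
  unfold C
  rw [onLine_mk]
  constructor <;> intro h <;> · simp only [Matrix.cons_val_zero, Matrix.cons_val_one,
    Matrix.head_cons, Matrix.cons_val_two, Matrix.tail_cons] at * ; linear_combination h

lemma flex_iff (P : P2) :
    IsFlex P ↔ ∃ c : ℂ, c ^ 3 = 1 ∧ (P = A c ∨ P = B c ∨ P = C c) := by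
  constructor
  · rintro ⟨h1, h2⟩
    set v := P.rep with hvdef
    have hv : v ≠ 0 := P.rep_nonzero
    have hPmk : P = Projectivization.mk ℂ v hv := (Projectivization.mk_rep P).symm
    rcases mul_eq_zero.1 h2 with h' | h02
    · rcases mul_eq_zero.1 h' with h00 | h01
      · -- v 0 = 0 : point of C type
        have hv1 : v 1 ≠ 0 := by
          intro h
          have hv2 : v 2 = 0 := by
            have : v 2 ^ 3 = 0 := by rw [h00, h] at h1; linear_combination h1
            exact pow_eq_zero_iff (by norm_num) |>.1 this
          exact hv (funext fun i => by fin_cases i <;> assumption)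
        refine ⟨-v 2 / v 1, ?_, Or.inr (Or.inr ?_)⟩
        · have hv2 : v 2 ≠ 0 := by
            intro h
            have : v 1 ^ 3 = 0 := by rw [h00, h] at h1; linear_combination h1
            exact hv1 (pow_eq_zero_iff (by norm_num) |>.1 this)
          field_simp
          rw [h00] at h1
          linear_combination -h1
        · rw [hPmk]
          unfold C
          rw [Projectivization.mk_eq_mk_iff']
          refine ⟨v 1, funext fun i => ?_⟩
          fin_cases i
          · simpa using h00.symm
          · simp
          · simp only [Pi.smul_apply, smul_eq_mul, Matrix.cons_val_two, Matrix.tail_cons]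
            field_simp
            show v 1 * (v 2 / v 1) = v 2
            field_simp
      · -- v 1 = 0 : point of B type
        have hv0 : v 0 ≠ 0 := by
          intro h
          have hv2 : v 2 = 0 := by
            have : v 2 ^ 3 = 0 := by rw [h01, h] at h1; linear_combination h1
            exact pow_eq_zero_iff (by norm_num) |>.1 this
          exact hv (funext fun i => by fin_cases i <;> assumption)
        refine ⟨-v 2 / v 0, ?_, Or.inr (Or.inl ?_)⟩
        · have hv2 : v 2 ≠ 0 := by
            intro h
            have : v 0 ^ 3 = 0 := by rw [h01, h] at h1; linear_combination h1
            exact hv0 (pow_eq_zero_iff (by norm_num) |>.1 this)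
          field_simp
          rw [h01] at h1
          linear_combination -h1
        · rw [hPmk]
          unfold B
          rw [Projectivization.mk_eq_mk_iff']
          refine ⟨v 0, funext fun i => ?_⟩
          fin_cases i
          · simp
          · simpa using h01.symm
          · simp only [Pi.smul_apply, smul_eq_mul, Matrix.cons_val_two, Matrix.tail_cons]
            field_simp
            show v 0 * (v 2 / v 0) = v 2
            field_simp
    · -- v 2 = 0 : point of A type
      have hv0 : v 0 ≠ 0 := by
        intro h
        have hv1 : v 1 = 0 := by
          have : v 1 ^ 3 = 0 := by rw [h02, h] at h1; linear_combination h1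
          exact pow_eq_zero_iff (by norm_num) |>.1 this
        exact hv (funext fun i => by fin_cases i <;> assumption)
      refine ⟨-v 1 / v 0, ?_, Or.inl ?_⟩
      · have hv1 : v 1 ≠ 0 := by
          intro h
          have : v 0 ^ 3 = 0 := by rw [h02, h] at h1; linear_combination h1
          exact hv0 (pow_eq_zero_iff (by norm_num) |>.1 this)
        field_simp
        rw [h02] at h1
        linear_combination -h1
      · rw [hPmk]
        unfold A
        rw [Projectivization.mk_eq_mk_iff']
        refine ⟨v 0, funext fun i => ?_⟩
        fin_cases i
        · simp
        · simp only [Pi.smul_apply, smul_eq_mul, Matrix.cons_val_one, Matrix.head_cons]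
          field_simp
          show v 0 * (v 1 / v 0) = v 1
          field_simp
        · simpa using h02.symm
  · rintro ⟨c, hc, rfl | rfl | rfl⟩
    · unfold A
      rw [isFlex_mk]
      constructor
      · simp only [Matrix.cons_val_zero, Matrix.cons_val_one, Matrix.head_cons,
          Matrix.cons_val_two, Matrix.tail_cons]
        linear_combination -hc
      · simp only [Matrix.cons_val_zero, Matrix.cons_val_one, Matrix.head_cons,
          Matrix.cons_val_two, Matrix.tail_cons]
        ring
    · unfold B
      rw [isFlex_mk]
      constructor
      · simp only [Matrix.cons_val_zero, Matrix.cons_val_one, Matrix.head_cons,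
          Matrix.cons_val_two, Matrix.tail_cons]
        linear_combination -hc
      · simp only [Matrix.cons_val_zero, Matrix.cons_val_one, Matrix.head_cons,
          Matrix.cons_val_two, Matrix.tail_cons]
        ring
    · unfold C
      rw [isFlex_mk]
      constructor
      · simp only [Matrix.cons_val_zero, Matrix.cons_val_one, Matrix.head_cons,
          Matrix.cons_val_two, Matrix.tail_cons]
        linear_combination -hc
      · simp only [Matrix.cons_val_zero, Matrix.cons_val_one, Matrix.head_cons,
          Matrix.cons_val_two, Matrix.tail_cons]
        ring

lemma A_inj {c d : ℂ} (h : A c = A d) : c = d := by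
  unfold A at h
  rw [Projectivization.mk_eq_mk_iff'] at h
  obtain ⟨a, ha⟩ := h
  have h0 := congrFun ha 0
  have h1 := congrFun ha 1
  simp only [Pi.smul_apply, smul_eq_mul, Matrix.cons_val_zero, Matrix.cons_val_one,
    Matrix.head_cons] at h0 h1
  rw [mul_one] at h0
  rw [h0] at h1
  linear_combination h1

lemma B_inj {c d : ℂ} (h : B c = B d) : c = d := by
  unfold B at h
  rw [Projectivization.mk_eq_mk_iff'] at h
  obtain ⟨a, ha⟩ := h
  have h0 := congrFun ha 0
  have h1 := congrFun ha 2
  simp only [Pi.smul_apply, smul_eq_mul, Matrix.cons_val_zero, Matrix.cons_val_one,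
    Matrix.head_cons, Matrix.cons_val_two, Matrix.tail_cons] at h0 h1
  rw [mul_one] at h0
  rw [h0] at h1
  linear_combination h1

lemma C_inj {c d : ℂ} (h : C c = C d) : c = d := by
  unfold C at h
  rw [Projectivization.mk_eq_mk_iff'] at h
  obtain ⟨a, ha⟩ := h
  have h0 := congrFun ha 1
  have h1 := congrFun ha 2
  simp only [Pi.smul_apply, smul_eq_mul, Matrix.cons_val_zero, Matrix.cons_val_one,
    Matrix.head_cons, Matrix.cons_val_two, Matrix.tail_cons] at h0 h1
  rw [mul_one] at h0
  rw [h0] at h1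
  linear_combination h1

lemma A_ne_B {c d : ℂ} (hd : d ≠ 0) : A c ≠ B d := by
  intro h
  unfold A B at h
  rw [Projectivization.mk_eq_mk_iff'] at h
  obtain ⟨a, ha⟩ := h
  have h0 := congrFun ha 0
  have h2 := congrFun ha 2
  simp only [Pi.smul_apply, smul_eq_mul, Matrix.cons_val_zero, Matrix.cons_val_one,
    Matrix.head_cons, Matrix.cons_val_two, Matrix.tail_cons] at h0 h2
  rw [mul_one] at h0
  rw [h0] at h2
  simp at h2
  exact hd h2

lemma A_ne_C {c d : ℂ} : A c ≠ C d := by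
  intro h
  unfold A C at h
  rw [Projectivization.mk_eq_mk_iff'] at h
  obtain ⟨a, ha⟩ := h
  have h0 := congrFun ha 0
  simp only [Pi.smul_apply, smul_eq_mul, Matrix.cons_val_zero] at h0
  simp at h0

lemma B_ne_C {c d : ℂ} : B c ≠ C d := by
  intro h
  unfold B C at h
  rw [Projectivization.mk_eq_mk_iff'] at h
  obtain ⟨a, ha⟩ := h
  have h0 := congrFun ha 0
  simp only [Pi.smul_apply, smul_eq_mul, Matrix.cons_val_zero] at h0
  simp at h0

lemma ncard_triple {x y z : P2} (hxy : x ≠ y) (hxz : x ≠ z) (hyz : y ≠ z) :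
    ({x, y, z} : Set P2).ncard = 3 :=
  Set.ncard_eq_three.2 ⟨x, y, z, hxy, hxz, hyz, rfl⟩

/-- The flexes on a "mixed" line. -/
lemma mixedS (l : Fin 3 → ℂ) (c d : ℂ) (hc : c ^ 3 = 1) (hd : d ^ 3 = 1)
    (hl0 : l 0 ≠ 0) (h1 : l 0 - c * l 1 = 0) (h2 : l 0 - d * l 2 = 0) :
    {R : P2 | IsFlex R ∧ OnLine R l} = {A c, B d, C (d / c)} := by
  have hc0 : c ≠ 0 := cube_ne_zero hc
  have hd0 : d ≠ 0 := cube_ne_zero hd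
  have hl1 : l 1 ≠ 0 := by
    intro h
    rw [h, mul_zero, sub_zero] at h1
    exact hl0 h1
  have hl2 : l 2 ≠ 0 := by
    intro h
    rw [h, mul_zero, sub_zero] at h2
    exact hl0 h2
  ext R
  simp only [Set.mem_setOf_eq, Set.mem_insert_iff, Set.mem_singleton_iff]
  constructor
  · rintro ⟨hflex, hon⟩
    obtain ⟨e, he, rfl | rfl | rfl⟩ := (flex_iff _).1 hflex
    · left
      rw [onLine_A] at hon
      have : (c - e) * l 1 = 0 := by linear_combination hon - h1
      have hce : e = c := by
        rcases mul_eq_zero.1 this with h | h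
        · linear_combination -h
        · exact absurd h hl1
      rw [hce]
    · right; left
      rw [onLine_B] at hon
      have : (d - e) * l 2 = 0 := by linear_combination hon - h2
      have hde : e = d := by
        rcases mul_eq_zero.1 this with h | h
        · linear_combination -h
        · exact absurd h hl2
      rw [hde]
    · right; right
      rw [onLine_C] at hon
      -- l 1 = e * l 2 ; l 1 = l 0 / c ; l 2 = l 0 / d  ⇒ e = d / c
      have key : (d - e * c) * l 0 = 0 := by
        linear_combination c * d * hon + d * h1 - e * c * h2
      have : d - e * c = 0 := (mul_eq_zero.1 key).resolve_right hl0
      have he' : e = d / c := by field_simp; linear_combination -this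
      rw [he']
  · rintro (rfl | rfl | rfl)
    · refine ⟨(flex_iff _).2 ⟨c, hc, Or.inl rfl⟩, ?_⟩
      rw [onLine_A]; exact h1
    · refine ⟨(flex_iff _).2 ⟨d, hd, Or.inr (Or.inl rfl)⟩, ?_⟩
      rw [onLine_B]; exact h2
    · refine ⟨(flex_iff _).2 ⟨d / c, by rw [div_pow, hc, hd]; norm_num,
        Or.inr (Or.inr rfl)⟩, ?_⟩
      rw [onLine_C]
      have key : d / c * l 2 = l 1 := by
        rw [div_mul_eq_mul_div, div_eq_iff hc0]
        linear_combination h1 - h2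
      exact sub_eq_zero.2 key.symm

lemma mixed_ncard (l : Fin 3 → ℂ) (c d : ℂ) (hc : c ^ 3 = 1) (hd : d ^ 3 = 1)
    (hl0 : l 0 ≠ 0) (h1 : l 0 - c * l 1 = 0) (h2 : l 0 - d * l 2 = 0) :
    {R : P2 | IsFlex R ∧ OnLine R l}.ncard = 3 := by
  rw [mixedS l c d hc hd hl0 h1 h2]
  exact ncard_triple (A_ne_B (cube_ne_zero hd)) A_ne_C B_ne_C

/-- The flexes on the line z = 0. -/
lemma coordS_A (l : Fin 3 → ℂ) (hl0 : l 0 = 0) (hl1 : l 1 = 0) (hl2 : l 2 ≠ 0) :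
    {R : P2 | IsFlex R ∧ OnLine R l} = {A 1, A ζ, A (ζ ^ 2)} := by
  ext R
  simp only [Set.mem_setOf_eq, Set.mem_insert_iff, Set.mem_singleton_iff]
  constructor
  · rintro ⟨hflex, hon⟩
    obtain ⟨e, he, rfl | rfl | rfl⟩ := (flex_iff _).1 hflex
    · rcases (cube_roots e).1 he with rfl | rfl | rfl
      · exact Or.inl rfl
      · exact Or.inr (Or.inl rfl)
      · exact Or.inr (Or.inr rfl)
    · exfalso
      rw [onLine_B, hl0] at hon
      have : e = 0 := by
        rcases mul_eq_zero.1 (by linear_combination -hon : e * l 2 = 0) with h | h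
        · exact h
        · exact absurd h hl2
      exact cube_ne_zero he this
    · exfalso
      rw [onLine_C, hl1] at hon
      have : e = 0 := by
        rcases mul_eq_zero.1 (by linear_combination -hon : e * l 2 = 0) with h | h
        · exact h
        · exact absurd h hl2
      exact cube_ne_zero he this
  · rintro (rfl | rfl | rfl) <;>
      refine ⟨(flex_iff _).2 ⟨_, ?_, Or.inl rfl⟩, by rw [onLine_A, hl0, hl1]; ring⟩
    · norm_num
    · exact ζ_cube
    · exact ζ_sq_cube

/-- The flexes on the line y = 0. -/
lemma coordS_B (l : Fin 3 → ℂ) (hl0 : l 0 = 0) (hl2 : l 2 = 0) (hl1 : l 1 ≠ 0) :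
    {R : P2 | IsFlex R ∧ OnLine R l} = {B 1, B ζ, B (ζ ^ 2)} := by
  ext R
  simp only [Set.mem_setOf_eq, Set.mem_insert_iff, Set.mem_singleton_iff]
  constructor
  · rintro ⟨hflex, hon⟩
    obtain ⟨e, he, rfl | rfl | rfl⟩ := (flex_iff _).1 hflex
    · exfalso
      rw [onLine_A, hl0] at hon
      have : e = 0 := by
        rcases mul_eq_zero.1 (by linear_combination -hon : e * l 1 = 0) with h | h
        · exact h
        · exact absurd h hl1
      exact cube_ne_zero he this
    · rcases (cube_roots e).1 he with rfl | rfl | rfl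
      · exact Or.inl rfl
      · exact Or.inr (Or.inl rfl)
      · exact Or.inr (Or.inr rfl)
    · exfalso
      rw [onLine_C, hl2] at hon
      have : l 1 = 0 := by linear_combination hon
      exact hl1 this
  · rintro (rfl | rfl | rfl) <;>
      refine ⟨(flex_iff _).2 ⟨_, ?_, Or.inr (Or.inl rfl)⟩, by rw [onLine_B, hl0, hl2]; ring⟩
    · norm_num
    · exact ζ_cube
    · exact ζ_sq_cube

/-- The flexes on the line x = 0. -/
lemma coordS_C (l : Fin 3 → ℂ) (hl1 : l 1 = 0) (hl2 : l 2 = 0) (hl0 : l 0 ≠ 0) :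
    {R : P2 | IsFlex R ∧ OnLine R l} = {C 1, C ζ, C (ζ ^ 2)} := by
  ext R
  simp only [Set.mem_setOf_eq, Set.mem_insert_iff, Set.mem_singleton_iff]
  constructor
  · rintro ⟨hflex, hon⟩
    obtain ⟨e, he, rfl | rfl | rfl⟩ := (flex_iff _).1 hflex
    · exfalso
      rw [onLine_A, hl1] at hon
      have : l 0 = 0 := by linear_combination hon
      exact hl0 this
    · exfalso
      rw [onLine_B, hl2] at hon
      have : l 0 = 0 := by linear_combination hon
      exact hl0 this
    · rcases (cube_roots e).1 he with rfl | rfl | rfl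
      · exact Or.inl rfl
      · exact Or.inr (Or.inl rfl)
      · exact Or.inr (Or.inr rfl)
  · rintro (rfl | rfl | rfl) <;>
      refine ⟨(flex_iff _).2 ⟨_, ?_, Or.inr (Or.inr rfl)⟩, by rw [onLine_C, hl1, hl2]; ring⟩
    · norm_num
    · exact ζ_cube
    · exact ζ_sq_cube

lemma l_ne_zero_aux {l : Fin 3 → ℂ} (h0 : l 0 = 0) (h1 : l 1 = 0) (h2 : l 2 = 0) : l = 0 :=
  funext fun i => by fin_cases i <;> assumption

end FlexAux

open FlexAux

/-- Every line through two distinct inflection points of the Fermat cubic contains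
exactly three inflection points. -/
theorem line_through_two_flexes (P Q : P2) (hP : IsFlex P) (hQ : IsFlex Q) (hPQ : P ≠ Q)
    (l : Fin 3 → ℂ) (hl : l ≠ 0) (hlP : OnLine P l) (hlQ : OnLine Q l) :
    {R : P2 | IsFlex R ∧ OnLine R l}.ncard = 3 := by
  obtain ⟨c, hc, hPc⟩ := (flex_iff P).1 hP
  obtain ⟨d, hd, hQd⟩ := (flex_iff Q).1 hQ
  have hc0 : c ≠ 0 := cube_ne_zero hc
  have hd0 : d ≠ 0 := cube_ne_zero hd
  rcases hPc with rfl | rfl | rfl <;> rcases hQd with rfl | rfl | rfl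
  · -- A c, A d : line z = 0
    rw [onLine_A] at hlP hlQ
    have hcd : c ≠ d := fun h => hPQ (by rw [h])
    have hl1 : l 1 = 0 := by
      have : (c - d) * l 1 = 0 := by linear_combination hlQ - hlP
      exact (mul_eq_zero.1 this).resolve_left (sub_ne_zero.2 hcd)
    have hl0 : l 0 = 0 := by rw [hl1, mul_zero, sub_zero] at hlP; exact hlP
    have hl2 : l 2 ≠ 0 := fun h => hl (l_ne_zero_aux hl0 hl1 h)
    rw [coordS_A l hl0 hl1 hl2]
    exact ncard_triple (fun h => ζ_ne_one (A_inj h).symm)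
      (fun h => ζ_sq_ne_one (A_inj h).symm) (fun h => ζ_ne_ζ_sq (A_inj h))
  · -- A c, B d
    rw [onLine_A] at hlP
    rw [onLine_B] at hlQ
    have hl0 : l 0 ≠ 0 := by
      intro h
      have h1 : l 1 = 0 := by
        rcases mul_eq_zero.1 (by rw [h] at hlP; linear_combination -hlP : c * l 1 = 0) with
          h' | h'
        · exact absurd h' hc0
        · exact h'
      have h2 : l 2 = 0 := by
        rcases mul_eq_zero.1 (by rw [h] at hlQ; linear_combination -hlQ : d * l 2 = 0) with
          h' | h'
        · exact absurd h' hd0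
        · exact h'
      exact hl (l_ne_zero_aux h h1 h2)
    exact mixed_ncard l c d hc hd hl0 hlP hlQ
  · -- A c, C d
    rw [onLine_A] at hlP
    rw [onLine_C] at hlQ
    have h2 : l 0 - (c * d) * l 2 = 0 := by linear_combination hlP + c * hlQ
    have hl0 : l 0 ≠ 0 := by
      intro h
      have h1 : l 1 = 0 := by
        rcases mul_eq_zero.1 (by rw [h] at hlP; linear_combination -hlP : c * l 1 = 0) with
          h' | h'
        · exact absurd h' hc0
        · exact h'
      have h2' : l 2 = 0 := by
        rcases mul_eq_zero.1 (by rw [h1] at hlQ; linear_combination -hlQ : d * l 2 = 0) with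
          h' | h'
        · exact absurd h' hd0
        · exact h'
      exact hl (l_ne_zero_aux h h1 h2')
    exact mixed_ncard l c (c * d) hc (by rw [mul_pow, hc, hd]; norm_num) hl0 hlP h2
  · -- B c, A d
    rw [onLine_B] at hlP
    rw [onLine_A] at hlQ
    have hl0 : l 0 ≠ 0 := by
      intro h
      have h1 : l 1 = 0 := by
        rcases mul_eq_zero.1 (by rw [h] at hlQ; linear_combination -hlQ : d * l 1 = 0) with
          h' | h'
        · exact absurd h' hd0
        · exact h'
      have h2 : l 2 = 0 := by
        rcases mul_eq_zero.1 (by rw [h] at hlP; linear_combination -hlP : c * l 2 = 0) with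
          h' | h'
        · exact absurd h' hc0
        · exact h'
      exact hl (l_ne_zero_aux h h1 h2)
    exact mixed_ncard l d c hd hc hl0 hlQ hlP
  · -- B c, B d : line y = 0
    rw [onLine_B] at hlP hlQ
    have hcd : c ≠ d := fun h => hPQ (by rw [h])
    have hl2 : l 2 = 0 := by
      have : (c - d) * l 2 = 0 := by linear_combination hlQ - hlP
      exact (mul_eq_zero.1 this).resolve_left (sub_ne_zero.2 hcd)
    have hl0 : l 0 = 0 := by rw [hl2, mul_zero, sub_zero] at hlP; exact hlP
    have hl1 : l 1 ≠ 0 := fun h => hl (l_ne_zero_aux hl0 h hl2)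
    rw [coordS_B l hl0 hl2 hl1]
    exact ncard_triple (fun h => ζ_ne_one (B_inj h).symm)
      (fun h => ζ_sq_ne_one (B_inj h).symm) (fun h => ζ_ne_ζ_sq (B_inj h))
  · -- B c, C d
    rw [onLine_B] at hlP
    rw [onLine_C] at hlQ
    have hl2 : l 2 ≠ 0 := by
      intro h
      have h0 : l 0 = 0 := by rw [h, mul_zero, sub_zero] at hlP; exact hlP
      have h1 : l 1 = 0 := by rw [h, mul_zero, sub_zero] at hlQ; exact hlQ
      exact hl (l_ne_zero_aux h0 h1 h)
    have hl0 : l 0 ≠ 0 := by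
      intro h
      rcases mul_eq_zero.1 (by rw [h] at hlP; linear_combination -hlP : c * l 2 = 0) with
        h' | h'
      · exact hc0 h'
      · exact hl2 h'
    have h1 : l 0 - (c / d) * l 1 = 0 := by
      have key : c / d * l 1 = l 0 := by
        rw [div_mul_eq_mul_div, div_eq_iff hd0]
        linear_combination c * hlQ - d * hlP
      exact sub_eq_zero.2 key.symm
    exact mixed_ncard l (c / d) c (by rw [div_pow, hc, hd]; norm_num) hc hl0 h1 hlP
  · -- C c, A d
    rw [onLine_C] at hlP
    rw [onLine_A] at hlQ
    have h2 : l 0 - (d * c) * l 2 = 0 := by linear_combination hlQ + d * hlP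
    have hl0 : l 0 ≠ 0 := by
      intro h
      have h1 : l 1 = 0 := by
        rcases mul_eq_zero.1 (by rw [h] at hlQ; linear_combination -hlQ : d * l 1 = 0) with
          h' | h'
        · exact absurd h' hd0
        · exact h'
      have h2' : l 2 = 0 := by
        rcases mul_eq_zero.1 (by rw [h1] at hlP; linear_combination -hlP : c * l 2 = 0) with
          h' | h'
        · exact absurd h' hc0
        · exact h'
      exact hl (l_ne_zero_aux h h1 h2')
    exact mixed_ncard l d (d * c) hd (by rw [mul_pow, hc, hd]; norm_num) hl0 hlQ h2
  · -- C c, B d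
    rw [onLine_C] at hlP
    rw [onLine_B] at hlQ
    have hl2 : l 2 ≠ 0 := by
      intro h
      have h0 : l 0 = 0 := by rw [h, mul_zero, sub_zero] at hlQ; exact hlQ
      have h1 : l 1 = 0 := by rw [h, mul_zero, sub_zero] at hlP; exact hlP
      exact hl (l_ne_zero_aux h0 h1 h)
    have hl0 : l 0 ≠ 0 := by
      intro h
      rcases mul_eq_zero.1 (by rw [h] at hlQ; linear_combination -hlQ : d * l 2 = 0) with
        h' | h'
      · exact hd0 h'
      · exact hl2 h'
    have h1 : l 0 - (d / c) * l 1 = 0 := by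
      have key : d / c * l 1 = l 0 := by
        rw [div_mul_eq_mul_div, div_eq_iff hc0]
        linear_combination d * hlP - c * hlQ
      exact sub_eq_zero.2 key.symm
    exact mixed_ncard l (d / c) d (by rw [div_pow, hc, hd]; norm_num) hd hl0 h1 hlQ
  · -- C c, C d : line x = 0
    rw [onLine_C] at hlP hlQ
    have hcd : c ≠ d := fun h => hPQ (by rw [h])
    have hl2 : l 2 = 0 := by
      have : (c - d) * l 2 = 0 := by linear_combination hlQ - hlP
      exact (mul_eq_zero.1 this).resolve_left (sub_ne_zero.2 hcd)
    have hl1 : l 1 = 0 := by rw [hl2, mul_zero, sub_zero] at hlP; exact hlP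
    have hl0 : l 0 ≠ 0 := fun h => hl (l_ne_zero_aux h hl1 hl2)
    rw [coordS_C l hl1 hl2 hl0]
    exact ncard_triple (fun h => ζ_ne_one (C_inj h).symm)
      (fun h => ζ_sq_ne_one (C_inj h).symm) (fun h => ζ_ne_ζ_sq (C_inj h))
end
end

section
/- There are exactly 12 lines in ℙ²(ℂ) each containing at least 3 (equivalently, exactly 3) of the 9 inflection points of the Fermat cubic, and each inflection point lies on exactly 4 of these lines (so they form a (12₃, 9₄) configuration). -/
noncomputable section

/-- The point `P` lies on the line `L` (a point of the dual plane). -/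
def OnL (P L : P2) : Prop :=
  L.rep 0 * P.rep 0 + L.rep 1 * P.rep 1 + L.rep 2 * P.rep 2 = 0

/-- The lines containing at least 3 inflection points of the Fermat cubic. -/
def HesseLines : Set P2 := {L | 3 ≤ {P : P2 | IsFlex P ∧ OnL P L}.ncard}



namespace Hesse

/-- a primitive cube root of unity -/
def ε : ℂ := ⟨-1/2, Real.sqrt 3 / 2⟩

lemma hsum : ε ^ 2 + ε + 1 = 0 := by
  have h3 : (Real.sqrt 3) ^ 2 = 3 := Real.sq_sqrt (by norm_num)
  apply Complex.ext <;>
    simp [ε, pow_two, Complex.add_re, Complex.mul_re, Complex.mul_im, Complex.add_im] <;>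
    nlinarith [h3]

lemma he3 : ε ^ 3 = 1 := by linear_combination (ε - 1) * hsum

lemma he0 : ε ≠ 0 := by
  intro h; have := hsum; rw [h] at this; norm_num at this

lemma he1 : ε ≠ 1 := by
  intro h; have := hsum; rw [h] at this; norm_num at this

lemma he2 : ε ^ 2 ≠ 1 := by
  intro h
  have h2 : ε = -2 := by linear_combination hsum - h
  have := hsum; rw [h2] at this; norm_num at this

lemma he21 : ε ^ 2 ≠ ε := by
  intro h
  have h2 : ε = -(1/2) := by linear_combination (hsum - h) / 2
  have := hsum; rw [h2] at this; norm_num at this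

/-- cube roots of unity -/
lemma cube_root {y : ℂ} (h : y ^ 3 = 1) : y = 1 ∨ y = ε ∨ y = ε ^ 2 := by
  have hf : (y - 1) * ((y - ε) * (y - ε ^ 2)) = 0 := by
    linear_combination h + (-y ^ 2 + ε * y - ε + 1) * hsum
  rcases mul_eq_zero.1 hf with h1 | h2
  · left; linear_combination h1
  · rcases mul_eq_zero.1 h2 with h1 | h1
    · right; left; linear_combination h1
    · right; right; linear_combination h1

def epow (a : Fin 3) : ℂ := ε ^ (a : ℕ)

lemma epow_mod (n : ℕ) : ε ^ n = ε ^ (n % 3) := by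
  conv_lhs => rw [← Nat.mod_add_div n 3, pow_add, pow_mul, he3, one_pow, mul_one]

lemma epow_add (a b : Fin 3) : epow (a + b) = epow a * epow b := by
  rw [epow, Fin.val_add, ← epow_mod, pow_add]; rfl

lemma epow_ne_zero (a : Fin 3) : epow a ≠ 0 := pow_ne_zero _ he0

lemma epow_inj {a b : Fin 3} : epow a = epow b ↔ a = b := by
  constructor
  · intro h
    fin_cases a <;> fin_cases b <;>
      (try simp only [epow, Fin.val_zero, Fin.val_one, Fin.val_two, pow_zero, pow_one] at h) <;>
      first
        | rfl
        | exact absurd h he1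
        | exact absurd h.symm he1
        | exact absurd h he2
        | exact absurd h.symm he2
        | exact absurd h he21
        | exact absurd h.symm he21
  · rintro rfl; rfl

open Projectivization

lemma vne {x y z : ℂ} (i : Fin 3) (h : ![x, y, z] i ≠ 0) : ![x, y, z] ≠ 0 :=
  fun h0 => h (by rw [h0]; rfl)

lemma mk_eq_mk3 {v w : Fin 3 → ℂ} (hv : v ≠ 0) (hw : w ≠ 0) :
    mk ℂ v hv = mk ℂ w hw ↔
      ∃ t : ℂ, t ≠ 0 ∧ v 0 = t * w 0 ∧ v 1 = t * w 1 ∧ v 2 = t * w 2 := by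
  rw [mk_eq_mk_iff]
  constructor
  · rintro ⟨a, rfl⟩
    exact ⟨a, a.ne_zero, rfl, rfl, rfl⟩
  · rintro ⟨t, ht, h0, h1, h2⟩
    refine ⟨Units.mk0 t ht, funext fun i => ?_⟩
    fin_cases i <;> simp [h0, h1, h2]

lemma rep_mk {v : Fin 3 → ℂ} (hv : v ≠ 0) :
    ∃ t : ℂ, t ≠ 0 ∧ ∀ i, (mk ℂ v hv).rep i = t * v i := by
  have h := (mk_eq_mk_iff ℂ _ _ (mk ℂ v hv).rep_nonzero hv).1 (mk_rep (mk ℂ v hv))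
  obtain ⟨a, ha⟩ := h
  exact ⟨a, a.ne_zero, fun i => by rw [← ha]; rfl⟩

lemma isFlex_mk {v : Fin 3 → ℂ} (hv : v ≠ 0) :
    IsFlex (mk ℂ v hv) ↔ v 0 ^ 3 + v 1 ^ 3 + v 2 ^ 3 = 0 ∧ v 0 * v 1 * v 2 = 0 := by
  obtain ⟨t, ht, hrep⟩ := rep_mk hv
  have ht3 : t ^ 3 ≠ 0 := pow_ne_zero _ ht
  unfold IsFlex
  rw [hrep 0, hrep 1, hrep 2]
  constructor
  · rintro ⟨h1, h2⟩
    constructor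
    · have : t ^ 3 * (v 0 ^ 3 + v 1 ^ 3 + v 2 ^ 3) = 0 := by linear_combination h1
      exact (mul_eq_zero.1 this).resolve_left ht3
    · have : t ^ 3 * (v 0 * v 1 * v 2) = 0 := by linear_combination h2
      exact (mul_eq_zero.1 this).resolve_left ht3
  · rintro ⟨h1, h2⟩
    constructor
    · linear_combination t ^ 3 * h1
    · linear_combination t ^ 3 * h2

lemma onL_mk {v l : Fin 3 → ℂ} (hv : v ≠ 0) (hl : l ≠ 0) :
    OnL (mk ℂ v hv) (mk ℂ l hl) ↔ l 0 * v 0 + l 1 * v 1 + l 2 * v 2 = 0 := by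
  obtain ⟨t, ht, hrepv⟩ := rep_mk hv
  obtain ⟨s, hs, hrepl⟩ := rep_mk hl
  unfold OnL
  rw [hrepv 0, hrepv 1, hrepv 2, hrepl 0, hrepl 1, hrepl 2]
  constructor
  · intro h
    have : s * t * (l 0 * v 0 + l 1 * v 1 + l 2 * v 2) = 0 := by linear_combination h
    exact ((mul_eq_zero.1 this).resolve_left (mul_ne_zero hs ht))
  · intro h; linear_combination s * t * h

/-! ### The nine inflection points and twelve lines -/

def pA (a : Fin 3) : P2 := mk ℂ ![1, -epow a, 0] (vne 0 (by norm_num))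
def pB (b : Fin 3) : P2 := mk ℂ ![1, 0, -epow b] (vne 0 (by norm_num))
def pC (c : Fin 3) : P2 := mk ℂ ![0, 1, -epow c] (vne 1 (by norm_num))

def lA : P2 := mk ℂ ![0, 0, 1] (vne 2 (by simp))
def lB : P2 := mk ℂ ![0, 1, 0] (vne 1 (by norm_num))
def lC : P2 := mk ℂ ![1, 0, 0] (vne 0 (by norm_num))
def m (b c : Fin 3) : P2 := mk ℂ ![epow b, epow c, 1] (vne 2 (by simp))

/-! ### Incidence lemmas -/

@[simp] lemma onL_pA_lA (a : Fin 3) : OnL (pA a) lA := by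
  rw [pA, lA, onL_mk]; simp

@[simp] lemma onL_pA_lB (a : Fin 3) : ¬ OnL (pA a) lB := by
  rw [pA, lB, onL_mk]; simp [epow_ne_zero]

@[simp] lemma onL_pA_lC (a : Fin 3) : ¬ OnL (pA a) lC := by
  rw [pA, lC, onL_mk]; simp

@[simp] lemma onL_pA_m (a b c : Fin 3) : OnL (pA a) (m b c) ↔ b = a + c := by
  rw [pA, m, onL_mk]
  simp only [Matrix.cons_val_zero, Matrix.cons_val_one, Matrix.head_cons,
    Matrix.cons_val_two, Matrix.tail_cons]
  rw [show epow b * 1 + epow c * -epow a + 1 * 0 = epow b - epow (a + c) by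
    rw [epow_add]; ring, sub_eq_zero, epow_inj]

@[simp] lemma onL_pB_lA (b : Fin 3) : ¬ OnL (pB b) lA := by
  rw [pB, lA, onL_mk]; simp [epow_ne_zero]

@[simp] lemma onL_pB_lB (b : Fin 3) : OnL (pB b) lB := by
  rw [pB, lB, onL_mk]; simp

@[simp] lemma onL_pB_lC (b : Fin 3) : ¬ OnL (pB b) lC := by
  rw [pB, lC, onL_mk]; simp

@[simp] lemma onL_pB_m (b' b c : Fin 3) : OnL (pB b') (m b c) ↔ b = b' := by
  rw [pB, m, onL_mk]
  simp only [Matrix.cons_val_zero, Matrix.cons_val_one, Matrix.head_cons,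
    Matrix.cons_val_two, Matrix.tail_cons]
  rw [show epow b * 1 + epow c * 0 + 1 * -epow b' = epow b - epow b' by ring,
    sub_eq_zero, epow_inj]

@[simp] lemma onL_pC_lA (c : Fin 3) : ¬ OnL (pC c) lA := by
  rw [pC, lA, onL_mk]; simp [epow_ne_zero]

@[simp] lemma onL_pC_lB (c : Fin 3) : ¬ OnL (pC c) lB := by
  rw [pC, lB, onL_mk]; simp

@[simp] lemma onL_pC_lC (c : Fin 3) : OnL (pC c) lC := by
  rw [pC, lC, onL_mk]; simp

@[simp] lemma onL_pC_m (c' b c : Fin 3) : OnL (pC c') (m b c) ↔ c = c' := by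
  rw [pC, m, onL_mk]
  simp only [Matrix.cons_val_zero, Matrix.cons_val_one, Matrix.head_cons,
    Matrix.cons_val_two, Matrix.tail_cons]
  rw [show epow b * 0 + epow c * 1 + 1 * -epow c' = epow c - epow c' by ring,
    sub_eq_zero, epow_inj]

/-! ### Distinctness lemmas -/

@[simp] lemma pA_inj {a a' : Fin 3} : pA a = pA a' ↔ a = a' := by
  rw [pA, pA, mk_eq_mk3]
  constructor
  · rintro ⟨t, ht, h0, h1, h2⟩
    simp only [Matrix.cons_val_zero, Matrix.cons_val_one, Matrix.head_cons] at h0 h1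
    rw [mul_one] at h0
    rw [← epow_inj]
    have := h1; rw [← h0] at this
    linear_combination -this
  · rintro rfl; exact ⟨1, one_ne_zero, by norm_num, by norm_num, by norm_num⟩

@[simp] lemma pB_inj {a a' : Fin 3} : pB a = pB a' ↔ a = a' := by
  rw [pB, pB, mk_eq_mk3]
  constructor
  · rintro ⟨t, ht, h0, h1, h2⟩
    simp only [Matrix.cons_val_zero, Matrix.cons_val_two, Matrix.tail_cons,
      Matrix.head_cons] at h0 h2
    rw [mul_one] at h0
    rw [← epow_inj]
    rw [← h0] at h2
    linear_combination -h2
  · rintro rfl; exact ⟨1, one_ne_zero, by norm_num, by norm_num, by norm_num⟩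

@[simp] lemma pC_inj {a a' : Fin 3} : pC a = pC a' ↔ a = a' := by
  rw [pC, pC, mk_eq_mk3]
  constructor
  · rintro ⟨t, ht, h0, h1, h2⟩
    simp only [Matrix.cons_val_zero, Matrix.cons_val_one, Matrix.cons_val_two, Matrix.tail_cons,
      Matrix.head_cons] at h1 h2
    rw [mul_one] at h1
    rw [← epow_inj]
    rw [← h1] at h2
    linear_combination -h2
  · rintro rfl; exact ⟨1, one_ne_zero, by norm_num, by norm_num, by norm_num⟩

@[simp] lemma m_inj {b c b' c' : Fin 3} : m b c = m b' c' ↔ b = b' ∧ c = c' := by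
  rw [m, m, mk_eq_mk3]
  constructor
  · rintro ⟨t, ht, h0, h1, h2⟩
    simp only [Matrix.cons_val_zero, Matrix.cons_val_one, Matrix.cons_val_two,
      Matrix.tail_cons, Matrix.head_cons] at h0 h1 h2
    rw [mul_one] at h2
    rw [← h2, one_mul] at h0 h1
    exact ⟨epow_inj.1 h0, epow_inj.1 h1⟩
  · rintro ⟨rfl, rfl⟩; exact ⟨1, one_ne_zero, by norm_num, by norm_num, by norm_num⟩

@[simp] lemma pA_ne_pB {a b : Fin 3} : pA a ≠ pB b := by
  rw [pA, pB, Ne, mk_eq_mk3]; rintro ⟨t, ht, h0, h1, h2⟩; simp_all [epow_ne_zero]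

@[simp] lemma pA_ne_pC {a b : Fin 3} : pA a ≠ pC b := by
  rw [pA, pC, Ne, mk_eq_mk3]; rintro ⟨t, ht, h0, h1, h2⟩; simp_all [epow_ne_zero]

@[simp] lemma pB_ne_pC {a b : Fin 3} : pB a ≠ pC b := by
  rw [pB, pC, Ne, mk_eq_mk3]; rintro ⟨t, ht, h0, h1, h2⟩; simp_all [epow_ne_zero]

@[simp] lemma pB_ne_pA {a b : Fin 3} : pB a ≠ pA b := fun h => pA_ne_pB h.symm
@[simp] lemma pC_ne_pA {a b : Fin 3} : pC a ≠ pA b := fun h => pA_ne_pC h.symm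
@[simp] lemma pC_ne_pB {a b : Fin 3} : pC a ≠ pB b := fun h => pB_ne_pC h.symm

@[simp] lemma lA_ne_lB : lA ≠ lB := by
  rw [lA, lB, Ne, mk_eq_mk3]; rintro ⟨t, ht, h0, h1, h2⟩; simp_all

@[simp] lemma lA_ne_lC : lA ≠ lC := by
  rw [lA, lC, Ne, mk_eq_mk3]; rintro ⟨t, ht, h0, h1, h2⟩; simp at h2

@[simp] lemma lB_ne_lC : lB ≠ lC := by
  rw [lB, lC, Ne, mk_eq_mk3]; rintro ⟨t, ht, h0, h1, h2⟩; norm_num at h1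

@[simp] lemma lB_ne_lA : lB ≠ lA := fun h => lA_ne_lB h.symm
@[simp] lemma lC_ne_lA : lC ≠ lA := fun h => lA_ne_lC h.symm
@[simp] lemma lC_ne_lB : lC ≠ lB := fun h => lB_ne_lC h.symm

@[simp] lemma lA_ne_m {b c : Fin 3} : lA ≠ m b c := by
  rw [lA, m, Ne, mk_eq_mk3]; rintro ⟨t, ht, h0, h1, h2⟩; simp_all [epow_ne_zero]

@[simp] lemma lB_ne_m {b c : Fin 3} : lB ≠ m b c := by
  rw [lB, m, Ne, mk_eq_mk3]; rintro ⟨t, ht, h0, h1, h2⟩; simp_all [epow_ne_zero]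

@[simp] lemma lC_ne_m {b c : Fin 3} : lC ≠ m b c := by
  rw [lC, m, Ne, mk_eq_mk3]; rintro ⟨t, ht, h0, h1, h2⟩; simp_all [epow_ne_zero]

@[simp] lemma m_ne_lA {b c : Fin 3} : m b c ≠ lA := fun h => lA_ne_m h.symm
@[simp] lemma m_ne_lB {b c : Fin 3} : m b c ≠ lB := fun h => lB_ne_m h.symm
@[simp] lemma m_ne_lC {b c : Fin 3} : m b c ≠ lC := fun h => lC_ne_m h.symm

@[simp] lemma epow0 : epow 0 = 1 := by simp [epow]
@[simp] lemma epow1 : epow 1 = ε := by simp [epow]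
@[simp] lemma epow2 : epow 2 = ε ^ 2 := by simp [epow]

lemma epow_cube (a : Fin 3) : epow a ^ 3 = 1 := by
  rw [epow, ← pow_mul, mul_comm, pow_mul, he3, one_pow]

lemma vzero {v : Fin 3 → ℂ} (h0 : v 0 = 0) (h1 : v 1 = 0) (h2 : v 2 = 0) : v = 0 := by
  funext i; fin_cases i <;> assumption

lemma mkA {v : Fin 3 → ℂ} (hv : v ≠ 0) (h0 : v 0 ≠ 0) {a : Fin 3}
    (ha : v 1 = -epow a * v 0) (hz : v 2 = 0) : mk ℂ v hv = pA a := by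
  rw [pA, mk_eq_mk3]
  exact ⟨v 0, h0, by norm_num, by rw [ha]; norm_num; ring, by rw [hz]; simp⟩

lemma mkB {v : Fin 3 → ℂ} (hv : v ≠ 0) (h0 : v 0 ≠ 0) {a : Fin 3}
    (ha : v 2 = -epow a * v 0) (hz : v 1 = 0) : mk ℂ v hv = pB a := by
  rw [pB, mk_eq_mk3]
  exact ⟨v 0, h0, by norm_num, by rw [hz]; norm_num, by rw [ha]; simp only [Matrix.cons_val]; ring⟩

lemma mkC {v : Fin 3 → ℂ} (hv : v ≠ 0) (h1 : v 1 ≠ 0) {a : Fin 3}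
    (ha : v 2 = -epow a * v 1) (hz : v 0 = 0) : mk ℂ v hv = pC a := by
  rw [pC, mk_eq_mk3]
  exact ⟨v 1, h1, by rw [hz]; norm_num, by norm_num, by rw [ha]; simp only [Matrix.cons_val]; ring⟩

lemma isFlex_iff (P : P2) : IsFlex P ↔ ∃ a, P = pA a ∨ P = pB a ∨ P = pC a := by
  constructor
  · rintro ⟨h1, h2⟩
    have hP : P = mk ℂ P.rep P.rep_nonzero := (mk_rep P).symm
    set v := P.rep with hvdef
    have hv : v ≠ 0 := P.rep_nonzero
    rcases mul_eq_zero.1 h2 with h | hz2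
    · rcases mul_eq_zero.1 h with hz0 | hz1
      · -- v 0 = 0 : P = pC a
        have h1' : v 1 ^ 3 + v 2 ^ 3 = 0 := by rw [hz0] at h1; linear_combination h1
        have hn1 : v 1 ≠ 0 := by
          intro h0
          have : v 2 ^ 3 = 0 := by rw [h0] at h1'; linear_combination h1'
          exact hv (vzero hz0 h0 (pow_eq_zero_iff (n := 3) (by norm_num) |>.1 this))
        have hu : (-(v 2 / v 1)) ^ 3 = 1 := by
          field_simp
          linear_combination -h1'
        rcases cube_root hu with h | h | h
        · refine ⟨0, Or.inr (Or.inr ?_)⟩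
          rw [hP]
          exact mkC hv hn1 (by field_simp at h; simp; linear_combination -h) hz0
        · refine ⟨1, Or.inr (Or.inr ?_)⟩
          rw [hP]
          exact mkC hv hn1 (by field_simp at h; simp; linear_combination -h) hz0
        · refine ⟨2, Or.inr (Or.inr ?_)⟩
          rw [hP]
          exact mkC hv hn1 (by field_simp at h; simp; linear_combination -h) hz0
      · -- v 1 = 0 : P = pB a
        have h1' : v 0 ^ 3 + v 2 ^ 3 = 0 := by rw [hz1] at h1; linear_combination h1
        have hn0 : v 0 ≠ 0 := by
          intro h0
          have : v 2 ^ 3 = 0 := by rw [h0] at h1'; linear_combination h1'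
          exact hv (vzero h0 hz1 (pow_eq_zero_iff (n := 3) (by norm_num) |>.1 this))
        have hu : (-(v 2 / v 0)) ^ 3 = 1 := by
          field_simp
          linear_combination -h1'
        rcases cube_root hu with h | h | h
        · refine ⟨0, Or.inr (Or.inl ?_)⟩
          rw [hP]
          exact mkB hv hn0 (by field_simp at h; simp; linear_combination -h) hz1
        · refine ⟨1, Or.inr (Or.inl ?_)⟩
          rw [hP]
          exact mkB hv hn0 (by field_simp at h; simp; linear_combination -h) hz1
        · refine ⟨2, Or.inr (Or.inl ?_)⟩
          rw [hP]
          exact mkB hv hn0 (by field_simp at h; simp; linear_combination -h) hz1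
    · -- v 2 = 0 : P = pA a
      have h1' : v 0 ^ 3 + v 1 ^ 3 = 0 := by rw [hz2] at h1; linear_combination h1
      have hn0 : v 0 ≠ 0 := by
        intro h0
        have : v 1 ^ 3 = 0 := by rw [h0] at h1'; linear_combination h1'
        exact hv (vzero h0 (pow_eq_zero_iff (n := 3) (by norm_num) |>.1 this) hz2)
      have hu : (-(v 1 / v 0)) ^ 3 = 1 := by
        field_simp
        linear_combination -h1'
      rcases cube_root hu with h | h | h
      · refine ⟨0, Or.inl ?_⟩
        rw [hP]
        exact mkA hv hn0 (by field_simp at h; simp; linear_combination -h) hz2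
      · refine ⟨1, Or.inl ?_⟩
        rw [hP]
        exact mkA hv hn0 (by field_simp at h; simp; linear_combination -h) hz2
      · refine ⟨2, Or.inl ?_⟩
        rw [hP]
        exact mkA hv hn0 (by field_simp at h; simp; linear_combination -h) hz2
  · rintro ⟨a, rfl | rfl | rfl⟩
    · rw [pA, isFlex_mk]
      refine ⟨?_, by simp⟩
      simp only [Matrix.cons_val]
      norm_num
      linear_combination -epow_cube a
    · rw [pB, isFlex_mk]
      refine ⟨?_, by simp⟩
      simp only [Matrix.cons_val]
      norm_num
      linear_combination -epow_cube a
    · rw [pC, isFlex_mk]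
      refine ⟨?_, by simp⟩
      simp only [Matrix.cons_val]
      norm_num
      linear_combination -epow_cube a

/-! ### Point sets of the twelve lines -/

lemma pts_m (b c : Fin 3) :
    {P : P2 | IsFlex P ∧ OnL P (m b c)} = {pA (b - c), pB b, pC c} := by
  ext P
  simp only [Set.mem_setOf_eq, Set.mem_insert_iff, Set.mem_singleton_iff, isFlex_iff]
  constructor
  · rintro ⟨⟨a, rfl | rfl | rfl⟩, hOn⟩
    · rw [onL_pA_m] at hOn
      left; rw [pA_inj, eq_sub_iff_add_eq]; exact hOn.symm
    · rw [onL_pB_m] at hOn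
      right; left; rw [pB_inj]; exact hOn.symm
    · rw [onL_pC_m] at hOn
      right; right; rw [pC_inj]; exact hOn.symm
  · rintro (rfl | rfl | rfl)
    · exact ⟨⟨b - c, Or.inl rfl⟩, by rw [onL_pA_m]; rw [sub_add_cancel]⟩
    · exact ⟨⟨b, Or.inr (Or.inl rfl)⟩, by rw [onL_pB_m]⟩
    · exact ⟨⟨c, Or.inr (Or.inr rfl)⟩, by rw [onL_pC_m]⟩

lemma pts_lA : {P : P2 | IsFlex P ∧ OnL P lA} = {pA 0, pA 1, pA 2} := by
  ext P
  simp only [Set.mem_setOf_eq, Set.mem_insert_iff, Set.mem_singleton_iff, isFlex_iff]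
  constructor
  · rintro ⟨⟨a, rfl | rfl | rfl⟩, hOn⟩
    · fin_cases a
      · exact Or.inl rfl
      · exact Or.inr (Or.inl rfl)
      · exact Or.inr (Or.inr rfl)
    · exact absurd hOn (onL_pB_lA a)
    · exact absurd hOn (onL_pC_lA a)
  · rintro (rfl | rfl | rfl) <;> exact ⟨⟨_, Or.inl rfl⟩, onL_pA_lA _⟩

lemma pts_lB : {P : P2 | IsFlex P ∧ OnL P lB} = {pB 0, pB 1, pB 2} := by
  ext P
  simp only [Set.mem_setOf_eq, Set.mem_insert_iff, Set.mem_singleton_iff, isFlex_iff]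
  constructor
  · rintro ⟨⟨a, rfl | rfl | rfl⟩, hOn⟩
    · exact absurd hOn (onL_pA_lB a)
    · fin_cases a
      · exact Or.inl rfl
      · exact Or.inr (Or.inl rfl)
      · exact Or.inr (Or.inr rfl)
    · exact absurd hOn (onL_pC_lB a)
  · rintro (rfl | rfl | rfl) <;> exact ⟨⟨_, Or.inr (Or.inl rfl)⟩, onL_pB_lB _⟩

lemma pts_lC : {P : P2 | IsFlex P ∧ OnL P lC} = {pC 0, pC 1, pC 2} := by
  ext P
  simp only [Set.mem_setOf_eq, Set.mem_insert_iff, Set.mem_singleton_iff, isFlex_iff]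
  constructor
  · rintro ⟨⟨a, rfl | rfl | rfl⟩, hOn⟩
    · exact absurd hOn (onL_pA_lC a)
    · exact absurd hOn (onL_pB_lC a)
    · fin_cases a
      · exact Or.inl rfl
      · exact Or.inr (Or.inl rfl)
      · exact Or.inr (Or.inr rfl)
  · rintro (rfl | rfl | rfl) <;> exact ⟨⟨_, Or.inr (Or.inr rfl)⟩, onL_pC_lC _⟩

lemma ncard_pts_m (b c : Fin 3) : {P : P2 | IsFlex P ∧ OnL P (m b c)}.ncard = 3 := by
  rw [pts_m,
    Set.ncard_insert_of_notMem (by simp) (Set.toFinite _),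
    Set.ncard_insert_of_notMem (by simp) (Set.toFinite _),
    Set.ncard_singleton]

lemma ncard_pts_lA : {P : P2 | IsFlex P ∧ OnL P lA}.ncard = 3 := by
  rw [pts_lA,
    Set.ncard_insert_of_notMem (by simp) (Set.toFinite _),
    Set.ncard_insert_of_notMem (by simp) (Set.toFinite _),
    Set.ncard_singleton]

lemma ncard_pts_lB : {P : P2 | IsFlex P ∧ OnL P lB}.ncard = 3 := by
  rw [pts_lB,
    Set.ncard_insert_of_notMem (by simp) (Set.toFinite _),
    Set.ncard_insert_of_notMem (by simp) (Set.toFinite _),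
    Set.ncard_singleton]

lemma ncard_pts_lC : {P : P2 | IsFlex P ∧ OnL P lC}.ncard = 3 := by
  rw [pts_lC,
    Set.ncard_insert_of_notMem (by simp) (Set.toFinite _),
    Set.ncard_insert_of_notMem (by simp) (Set.toFinite _),
    Set.ncard_singleton]

def twelve : Set P2 :=
  {lA, lB, lC, m 0 0, m 0 1, m 0 2, m 1 0, m 1 1, m 1 2, m 2 0, m 2 1, m 2 2}

lemma m_mem_twelve (b c : Fin 3) : m b c ∈ twelve := by
  fin_cases b <;> fin_cases c <;> simp [twelve]

lemma ncard_twelve : twelve.ncard = 12 := by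
  rw [twelve]
  repeat rw [Set.ncard_insert_of_notMem (by simp) (Set.toFinite _)]
  rw [Set.ncard_singleton]

/-! ### Classification of Hesse lines -/

lemma onL_mk_left {v : Fin 3 → ℂ} (hv : v ≠ 0) (L : P2) :
    OnL (mk ℂ v hv) L ↔ L.rep 0 * v 0 + L.rep 1 * v 1 + L.rep 2 * v 2 = 0 := by
  conv_lhs => rw [← mk_rep L]
  rw [onL_mk]

lemma same_family_A {L : P2} {a a' : Fin 3} (h : a ≠ a')
    (h1 : OnL (pA a) L) (h2 : OnL (pA a') L) : L = lA := by
  rw [pA, onL_mk_left] at h1 h2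
  simp only [Matrix.cons_val_zero, Matrix.cons_val_one, Matrix.head_cons,
    Matrix.cons_val_two, Matrix.tail_cons] at h1 h2
  have hl := L.rep_nonzero
  have hl1 : L.rep 1 = 0 := by
    have hne : epow a - epow a' ≠ 0 := sub_ne_zero.2 fun hh => h (epow_inj.1 hh)
    have hz : (epow a - epow a') * L.rep 1 = 0 := by linear_combination h2 - h1
    exact (mul_eq_zero.1 hz).resolve_left hne
  have hl0 : L.rep 0 = 0 := by linear_combination h1 + epow a * hl1
  have hl2 : L.rep 2 ≠ 0 := fun hh => hl (vzero hl0 hl1 hh)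
  rw [← mk_rep L, lA, mk_eq_mk3]
  exact ⟨L.rep 2, hl2, by simp [hl0], by simp [hl1], by simp⟩

lemma same_family_B {L : P2} {b b' : Fin 3} (h : b ≠ b')
    (h1 : OnL (pB b) L) (h2 : OnL (pB b') L) : L = lB := by
  rw [pB, onL_mk_left] at h1 h2
  simp only [Matrix.cons_val_zero, Matrix.cons_val_one, Matrix.head_cons,
    Matrix.cons_val_two, Matrix.tail_cons] at h1 h2
  have hl := L.rep_nonzero
  have hl2 : L.rep 2 = 0 := by
    have hne : epow b - epow b' ≠ 0 := sub_ne_zero.2 fun hh => h (epow_inj.1 hh)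
    have hz : (epow b - epow b') * L.rep 2 = 0 := by linear_combination h2 - h1
    exact (mul_eq_zero.1 hz).resolve_left hne
  have hl0 : L.rep 0 = 0 := by linear_combination h1 + epow b * hl2
  have hl1 : L.rep 1 ≠ 0 := fun hh => hl (vzero hl0 hh hl2)
  rw [← mk_rep L, lB, mk_eq_mk3]
  exact ⟨L.rep 1, hl1, by simp [hl0], by simp, by simp [hl2]⟩

lemma same_family_C {L : P2} {c c' : Fin 3} (h : c ≠ c')
    (h1 : OnL (pC c) L) (h2 : OnL (pC c') L) : L = lC := by
  rw [pC, onL_mk_left] at h1 h2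
  simp only [Matrix.cons_val_zero, Matrix.cons_val_one, Matrix.head_cons,
    Matrix.cons_val_two, Matrix.tail_cons] at h1 h2
  have hl := L.rep_nonzero
  have hl2 : L.rep 2 = 0 := by
    have hne : epow c - epow c' ≠ 0 := sub_ne_zero.2 fun hh => h (epow_inj.1 hh)
    have hz : (epow c - epow c') * L.rep 2 = 0 := by linear_combination h2 - h1
    exact (mul_eq_zero.1 hz).resolve_left hne
  have hl1 : L.rep 1 = 0 := by linear_combination h1 + epow c * hl2
  have hl0 : L.rep 0 ≠ 0 := fun hh => hl (vzero hh hl1 hl2)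
  rw [← mk_rep L, lC, mk_eq_mk3]
  exact ⟨L.rep 0, hl0, by simp, by simp [hl1], by simp [hl2]⟩

lemma BC_line {L : P2} {b c : Fin 3} (hb : OnL (pB b) L) (hc : OnL (pC c) L) :
    L = m b c := by
  rw [pB, onL_mk_left] at hb
  rw [pC, onL_mk_left] at hc
  simp only [Matrix.cons_val_zero, Matrix.cons_val_one, Matrix.head_cons,
    Matrix.cons_val_two, Matrix.tail_cons] at hb hc
  have hl := L.rep_nonzero
  have hl2 : L.rep 2 ≠ 0 := by
    intro hh
    have h0 : L.rep 0 = 0 := by linear_combination hb + epow b * hh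
    have h1 : L.rep 1 = 0 := by linear_combination hc + epow c * hh
    exact hl (vzero h0 h1 hh)
  rw [← mk_rep L, m, mk_eq_mk3]
  refine ⟨L.rep 2, hl2, ?_, ?_, by simp⟩
  · simp only [Matrix.cons_val_zero]
    linear_combination hb
  · simp only [Matrix.cons_val_zero, Matrix.cons_val_one, Matrix.head_cons]
    linear_combination hc

lemma lA_mem_twelve : lA ∈ twelve := by simp [twelve]
lemma lB_mem_twelve : lB ∈ twelve := by simp [twelve]
lemma lC_mem_twelve : lC ∈ twelve := by simp [twelve]


lemma hesse_sub : HesseLines ⊆ twelve := by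
  intro L hL
  simp only [HesseLines, Set.mem_setOf_eq] at hL
  set S := {P : P2 | IsFlex P ∧ OnL P L} with hS
  have hfin : S.Finite := by
    by_contra h
    rw [Set.Infinite.ncard h] at hL
    omega
  obtain ⟨R1, hR1, R2, hR2, h12⟩ := (Set.one_lt_ncard hfin).1 (by omega)
  have hsub : ({R1, R2} : Set P2) ⊆ S := by rintro x (rfl | rfl) <;> assumption
  have hle : ({R1, R2} : Set P2).ncard ≤ 2 := by
    refine le_trans (Set.ncard_insert_le _ _) ?_
    rw [Set.ncard_singleton]
  have hdiff : 1 ≤ (S \ {R1, R2}).ncard := by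
    rw [Set.ncard_diff hsub (Set.toFinite _)]
    omega
  obtain ⟨R3, hR3⟩ := Set.nonempty_of_ncard_ne_zero (s := S \ {R1, R2}) (by omega)
  obtain ⟨hR3S, hR3ne⟩ := hR3
  simp only [Set.mem_insert_iff, Set.mem_singleton_iff, not_or] at hR3ne
  obtain ⟨h31, h32⟩ := hR3ne
  obtain ⟨hf1, ho1⟩ := hR1
  obtain ⟨hf2, ho2⟩ := hR2
  obtain ⟨hf3, ho3⟩ := hR3S
  have tA : L = lA → L ∈ twelve := fun h => h ▸ lA_mem_twelve
  have tB : L = lB → L ∈ twelve := fun h => h ▸ lB_mem_twelve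
  have tC : L = lC → L ∈ twelve := fun h => h ▸ lC_mem_twelve
  have tm : ∀ b c, L = m b c → L ∈ twelve := fun b c h => by rw [h]; exact m_mem_twelve b c
  rcases (isFlex_iff R1).1 hf1 with ⟨a1, rfl | rfl | rfl⟩ <;>
    rcases (isFlex_iff R2).1 hf2 with ⟨a2, rfl | rfl | rfl⟩ <;>
    rcases (isFlex_iff R3).1 hf3 with ⟨a3, rfl | rfl | rfl⟩
  · exact tA (same_family_A (by simpa using h12) ho1 ho2)
  · exact tA (same_family_A (by simpa using h12) ho1 ho2)
  · exact tA (same_family_A (by simpa using h12) ho1 ho2)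
  · exact tA (same_family_A (by simpa using h31) ho3 ho1)
  · exact tB (same_family_B (by simpa using h32) ho3 ho2)
  · exact tm _ _ (BC_line ho2 ho3)
  · exact tA (same_family_A (by simpa using h31) ho3 ho1)
  · exact tm _ _ (BC_line ho3 ho2)
  · exact tC (same_family_C (by simpa using h32) ho3 ho2)
  · exact tA (same_family_A (by simpa using h32) ho3 ho2)
  · exact tB (same_family_B (by simpa using h31) ho3 ho1)
  · exact tm _ _ (BC_line ho1 ho3)
  · exact tB (same_family_B (by simpa using h12) ho1 ho2)
  · exact tB (same_family_B (by simpa using h12) ho1 ho2)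
  · exact tB (same_family_B (by simpa using h12) ho1 ho2)
  · exact tm _ _ (BC_line ho1 ho2)
  · exact tB (same_family_B (by simpa using h31) ho3 ho1)
  · exact tC (same_family_C (by simpa using h32) ho3 ho2)
  · exact tA (same_family_A (by simpa using h32) ho3 ho2)
  · exact tm _ _ (BC_line ho3 ho1)
  · exact tC (same_family_C (by simpa using h31) ho3 ho1)
  · exact tm _ _ (BC_line ho2 ho1)
  · exact tB (same_family_B (by simpa using h32) ho3 ho2)
  · exact tC (same_family_C (by simpa using h31) ho3 ho1)
  · exact tC (same_family_C (by simpa using h12) ho1 ho2)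
  · exact tC (same_family_C (by simpa using h12) ho1 ho2)
  · exact tC (same_family_C (by simpa using h12) ho1 ho2)

lemma hesse_sup : twelve ⊆ HesseLines := by
  intro L hL
  simp only [twelve, Set.mem_insert_iff, Set.mem_singleton_iff] at hL
  simp only [HesseLines, Set.mem_setOf_eq]
  rcases hL with rfl | rfl | rfl | rfl | rfl | rfl | rfl | rfl | rfl | rfl | rfl | rfl
  · exact le_of_eq ncard_pts_lA.symm
  · exact le_of_eq ncard_pts_lB.symm
  · exact le_of_eq ncard_pts_lC.symm
  all_goals exact le_of_eq (ncard_pts_m _ _).symm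

lemma hesse_eq : HesseLines = twelve := Set.Subset.antisymm hesse_sub hesse_sup

lemma lines_pA0 : {L : P2 | L ∈ twelve ∧ OnL (pA 0) L} = {lA, m 0 0, m 1 1, m 2 2} := by
  ext L
  simp only [Set.mem_setOf_eq, twelve, Set.mem_insert_iff, Set.mem_singleton_iff]
  constructor
  · rintro ⟨rfl | rfl | rfl | rfl | rfl | rfl | rfl | rfl | rfl | rfl | rfl | rfl, hOn⟩ <;>
      simp_all
  · rintro (rfl | rfl | rfl | rfl) <;> exact ⟨by simp, by simp⟩

lemma ncard_lines_pA0 : {L : P2 | L ∈ twelve ∧ OnL (pA 0) L}.ncard = 4 := by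
  rw [lines_pA0,
    Set.ncard_insert_of_notMem (by simp) (Set.toFinite _),
    Set.ncard_insert_of_notMem (by simp) (Set.toFinite _),
    Set.ncard_insert_of_notMem (by simp) (Set.toFinite _),
    Set.ncard_singleton]

lemma lines_pA1 : {L : P2 | L ∈ twelve ∧ OnL (pA 1) L} = {lA, m 1 0, m 2 1, m 0 2} := by
  ext L
  simp only [Set.mem_setOf_eq, twelve, Set.mem_insert_iff, Set.mem_singleton_iff]
  constructor
  · rintro ⟨rfl | rfl | rfl | rfl | rfl | rfl | rfl | rfl | rfl | rfl | rfl | rfl, hOn⟩ <;>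
      simp_all
  · rintro (rfl | rfl | rfl | rfl) <;> exact ⟨by simp, by simp⟩

lemma ncard_lines_pA1 : {L : P2 | L ∈ twelve ∧ OnL (pA 1) L}.ncard = 4 := by
  rw [lines_pA1,
    Set.ncard_insert_of_notMem (by simp) (Set.toFinite _),
    Set.ncard_insert_of_notMem (by simp) (Set.toFinite _),
    Set.ncard_insert_of_notMem (by simp) (Set.toFinite _),
    Set.ncard_singleton]

lemma lines_pA2 : {L : P2 | L ∈ twelve ∧ OnL (pA 2) L} = {lA, m 2 0, m 0 1, m 1 2} := by
  ext L
  simp only [Set.mem_setOf_eq, twelve, Set.mem_insert_iff, Set.mem_singleton_iff]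
  constructor
  · rintro ⟨rfl | rfl | rfl | rfl | rfl | rfl | rfl | rfl | rfl | rfl | rfl | rfl, hOn⟩ <;>
      simp_all
  · rintro (rfl | rfl | rfl | rfl) <;> exact ⟨by simp, by simp⟩

lemma ncard_lines_pA2 : {L : P2 | L ∈ twelve ∧ OnL (pA 2) L}.ncard = 4 := by
  rw [lines_pA2,
    Set.ncard_insert_of_notMem (by simp) (Set.toFinite _),
    Set.ncard_insert_of_notMem (by simp) (Set.toFinite _),
    Set.ncard_insert_of_notMem (by simp) (Set.toFinite _),
    Set.ncard_singleton]

lemma lines_pB0 : {L : P2 | L ∈ twelve ∧ OnL (pB 0) L} = {lB, m 0 0, m 0 1, m 0 2} := by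
  ext L
  simp only [Set.mem_setOf_eq, twelve, Set.mem_insert_iff, Set.mem_singleton_iff]
  constructor
  · rintro ⟨rfl | rfl | rfl | rfl | rfl | rfl | rfl | rfl | rfl | rfl | rfl | rfl, hOn⟩ <;>
      simp_all
  · rintro (rfl | rfl | rfl | rfl) <;> exact ⟨by simp, by simp⟩

lemma ncard_lines_pB0 : {L : P2 | L ∈ twelve ∧ OnL (pB 0) L}.ncard = 4 := by
  rw [lines_pB0,
    Set.ncard_insert_of_notMem (by simp) (Set.toFinite _),
    Set.ncard_insert_of_notMem (by simp) (Set.toFinite _),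
    Set.ncard_insert_of_notMem (by simp) (Set.toFinite _),
    Set.ncard_singleton]

lemma lines_pB1 : {L : P2 | L ∈ twelve ∧ OnL (pB 1) L} = {lB, m 1 0, m 1 1, m 1 2} := by
  ext L
  simp only [Set.mem_setOf_eq, twelve, Set.mem_insert_iff, Set.mem_singleton_iff]
  constructor
  · rintro ⟨rfl | rfl | rfl | rfl | rfl | rfl | rfl | rfl | rfl | rfl | rfl | rfl, hOn⟩ <;>
      simp_all
  · rintro (rfl | rfl | rfl | rfl) <;> exact ⟨by simp, by simp⟩

lemma ncard_lines_pB1 : {L : P2 | L ∈ twelve ∧ OnL (pB 1) L}.ncard = 4 := by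
  rw [lines_pB1,
    Set.ncard_insert_of_notMem (by simp) (Set.toFinite _),
    Set.ncard_insert_of_notMem (by simp) (Set.toFinite _),
    Set.ncard_insert_of_notMem (by simp) (Set.toFinite _),
    Set.ncard_singleton]

lemma lines_pB2 : {L : P2 | L ∈ twelve ∧ OnL (pB 2) L} = {lB, m 2 0, m 2 1, m 2 2} := by
  ext L
  simp only [Set.mem_setOf_eq, twelve, Set.mem_insert_iff, Set.mem_singleton_iff]
  constructor
  · rintro ⟨rfl | rfl | rfl | rfl | rfl | rfl | rfl | rfl | rfl | rfl | rfl | rfl, hOn⟩ <;>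
      simp_all
  · rintro (rfl | rfl | rfl | rfl) <;> exact ⟨by simp, by simp⟩

lemma ncard_lines_pB2 : {L : P2 | L ∈ twelve ∧ OnL (pB 2) L}.ncard = 4 := by
  rw [lines_pB2,
    Set.ncard_insert_of_notMem (by simp) (Set.toFinite _),
    Set.ncard_insert_of_notMem (by simp) (Set.toFinite _),
    Set.ncard_insert_of_notMem (by simp) (Set.toFinite _),
    Set.ncard_singleton]

lemma lines_pC0 : {L : P2 | L ∈ twelve ∧ OnL (pC 0) L} = {lC, m 0 0, m 1 0, m 2 0} := by
  ext L
  simp only [Set.mem_setOf_eq, twelve, Set.mem_insert_iff, Set.mem_singleton_iff]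
  constructor
  · rintro ⟨rfl | rfl | rfl | rfl | rfl | rfl | rfl | rfl | rfl | rfl | rfl | rfl, hOn⟩ <;>
      simp_all
  · rintro (rfl | rfl | rfl | rfl) <;> exact ⟨by simp, by simp⟩

lemma ncard_lines_pC0 : {L : P2 | L ∈ twelve ∧ OnL (pC 0) L}.ncard = 4 := by
  rw [lines_pC0,
    Set.ncard_insert_of_notMem (by simp) (Set.toFinite _),
    Set.ncard_insert_of_notMem (by simp) (Set.toFinite _),
    Set.ncard_insert_of_notMem (by simp) (Set.toFinite _),
    Set.ncard_singleton]

lemma lines_pC1 : {L : P2 | L ∈ twelve ∧ OnL (pC 1) L} = {lC, m 0 1, m 1 1, m 2 1} := by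
  ext L
  simp only [Set.mem_setOf_eq, twelve, Set.mem_insert_iff, Set.mem_singleton_iff]
  constructor
  · rintro ⟨rfl | rfl | rfl | rfl | rfl | rfl | rfl | rfl | rfl | rfl | rfl | rfl, hOn⟩ <;>
      simp_all
  · rintro (rfl | rfl | rfl | rfl) <;> exact ⟨by simp, by simp⟩

lemma ncard_lines_pC1 : {L : P2 | L ∈ twelve ∧ OnL (pC 1) L}.ncard = 4 := by
  rw [lines_pC1,
    Set.ncard_insert_of_notMem (by simp) (Set.toFinite _),
    Set.ncard_insert_of_notMem (by simp) (Set.toFinite _),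
    Set.ncard_insert_of_notMem (by simp) (Set.toFinite _),
    Set.ncard_singleton]

lemma lines_pC2 : {L : P2 | L ∈ twelve ∧ OnL (pC 2) L} = {lC, m 0 2, m 1 2, m 2 2} := by
  ext L
  simp only [Set.mem_setOf_eq, twelve, Set.mem_insert_iff, Set.mem_singleton_iff]
  constructor
  · rintro ⟨rfl | rfl | rfl | rfl | rfl | rfl | rfl | rfl | rfl | rfl | rfl | rfl, hOn⟩ <;>
      simp_all
  · rintro (rfl | rfl | rfl | rfl) <;> exact ⟨by simp, by simp⟩

lemma ncard_lines_pC2 : {L : P2 | L ∈ twelve ∧ OnL (pC 2) L}.ncard = 4 := by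
  rw [lines_pC2,
    Set.ncard_insert_of_notMem (by simp) (Set.toFinite _),
    Set.ncard_insert_of_notMem (by simp) (Set.toFinite _),
    Set.ncard_insert_of_notMem (by simp) (Set.toFinite _),
    Set.ncard_singleton]

end Hesse

open Hesse in
/-- The Hesse `(12₃, 9₄)` configuration: there are exactly 12 lines containing at least
(equivalently exactly) 3 of the 9 inflection points of the Fermat cubic, and each
inflection point lies on exactly 4 of them. -/
theorem hesse_configuration :
    HesseLines.ncard = 12 ∧
    (∀ L ∈ HesseLines, {P : P2 | IsFlex P ∧ OnL P L}.ncard = 3) ∧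
    (∀ P : P2, IsFlex P → {L : P2 | L ∈ HesseLines ∧ OnL P L}.ncard = 4) := by
  refine ⟨by rw [hesse_eq, ncard_twelve], ?_, ?_⟩
  · intro L hL
    rw [hesse_eq] at hL
    simp only [twelve, Set.mem_insert_iff, Set.mem_singleton_iff] at hL
    rcases hL with rfl | rfl | rfl | rfl | rfl | rfl | rfl | rfl | rfl | rfl | rfl | rfl
    · exact ncard_pts_lA
    · exact ncard_pts_lB
    · exact ncard_pts_lC
    all_goals exact ncard_pts_m _ _
  · intro P hP
    simp only [hesse_eq]
    obtain ⟨a, rfl | rfl | rfl⟩ := (isFlex_iff P).1 hP <;> fin_cases a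
    · exact ncard_lines_pA0
    · exact ncard_lines_pA1
    · exact ncard_lines_pA2
    · exact ncard_lines_pB0
    · exact ncard_lines_pB1
    · exact ncard_lines_pB2
    · exact ncard_lines_pC0
    · exact ncard_lines_pC1
    · exact ncard_lines_pC2
end
end

section
/- The common zero locus in ℙ²(ℂ) of the Fermat cubic x^3+y^3+z^3 and (x^3-y^3)(y^3-z^3)(z^3-x^3) consists of exactly 27 points. -/
noncomputable section

namespace Sext

def ω : ℂ := Complex.exp (2 * Real.pi * Complex.I / 3)

lemma hω : IsPrimitiveRoot ω 3 := Complex.isPrimitiveRoot_exp 3 (by norm_num)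

lemma hω3 : ω ^ 3 = 1 := hω.pow_eq_one

lemma ωpow3 (a : ℕ) : (ω ^ a) ^ 3 = 1 := by
  rw [← pow_mul, mul_comm, pow_mul, hω3, one_pow]

def γ : ℂ := -(((2:ℝ) ^ ((3:ℝ))⁻¹ : ℝ) : ℂ)

lemma hγ3 : γ ^ 3 = -2 := by
  have h : ((2:ℝ) ^ ((3:ℝ))⁻¹) ^ (3:ℕ) = 2 := by
    rw [← Real.rpow_natCast ((2:ℝ) ^ ((3:ℝ))⁻¹) 3, ← Real.rpow_mul (by norm_num)]
    norm_num
  have h2 : ((((2:ℝ) ^ ((3:ℝ))⁻¹ : ℝ) : ℂ)) ^ (3:ℕ) = 2 := by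
    exact_mod_cast congrArg Complex.ofReal h
  unfold γ
  rw [neg_pow, h2]
  norm_num

lemma hγ0 : γ ≠ 0 := by
  intro h
  have := hγ3
  rw [h] at this
  norm_num at this

lemma hω0 (a : ℕ) : ω ^ a ≠ 0 := by
  intro h
  have := ωpow3 a
  rw [h] at this
  norm_num at this

def v : Fin 3 → Fin 3 → Fin 3 → Fin 3 → ℂ :=
  ![fun a b => ![1, ω ^ (a:ℕ), γ * ω ^ (b:ℕ)],
    fun a b => ![γ * ω ^ (a:ℕ), 1, ω ^ (b:ℕ)],
    fun a b => ![1, γ * ω ^ (a:ℕ), ω ^ (b:ℕ)]]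

def s : Fin 3 → Fin 3 → ℂ :=
  ![![1, 1, -2], ![-2, 1, 1], ![1, -2, 1]]

lemma fin3 {P : Fin 3 → Prop} (h0 : P 0) (h1 : P 1) (h2 : P 2) : ∀ i, P i := fun i => by
  fin_cases i <;> assumption

lemma hcube (a b : Fin 3) : ∀ t i, (v t a b i) ^ 3 = s t i := by
  refine fin3 (fin3 ?_ ?_ ?_) (fin3 ?_ ?_ ?_) (fin3 ?_ ?_ ?_) <;>
    simp only [v, s, Matrix.cons_val_zero, Matrix.cons_val_one, Matrix.head_cons,
      Matrix.cons_val_two, Matrix.tail_cons, mul_pow, hγ3, ωpow3, one_pow, mul_one, one_mul,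
      neg_mul]

lemma hvne (t a b : Fin 3) : v t a b ≠ 0 := by
  intro h
  have h0 := congrFun h 0
  have h1 := congrFun h 1
  fin_cases t <;> simp [v, hγ0, hω0] at h0 h1

lemma ssum : ∀ t : Fin 3, s t 0 + s t 1 + s t 2 = 0 := by
  refine fin3 ?_ ?_ ?_ <;> norm_num [s, Matrix.cons_val_zero, Matrix.cons_val_one, Matrix.head_cons, Matrix.cons_val_two, Matrix.tail_cons, Matrix.vecHead, Matrix.vecTail]

lemma sprod : ∀ t : Fin 3, (s t 0 - s t 1) * (s t 1 - s t 2) * (s t 2 - s t 0) = 0 := by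
  refine fin3 ?_ ?_ ?_ <;> norm_num [s, Matrix.cons_val_zero, Matrix.cons_val_one, Matrix.head_cons, Matrix.cons_val_two, Matrix.tail_cons, Matrix.vecHead, Matrix.vecTail]

lemma pow_eq {a a' : Fin 3} (h : ω ^ (a:ℕ) = ω ^ (a':ℕ)) : a = a' :=
  Fin.ext (hω.pow_inj a.isLt a'.isLt h)

lemma cross : ∀ t t' : Fin 3, ∀ u : ℂ, (∀ i, u ^ 3 * s t' i = s t i) → t = t' := by
  refine fin3 (fin3 ?_ ?_ ?_) (fin3 ?_ ?_ ?_) (fin3 ?_ ?_ ?_) <;> intro u hc <;>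
    first
    | rfl
    | (have e0 := hc 0
       have e1 := hc 1
       have e2 := hc 2
       simp only [s, Matrix.cons_val_zero, Matrix.cons_val_one, Matrix.head_cons,
         Matrix.cons_val_two, Matrix.tail_cons, mul_one, mul_neg] at e0 e1 e2
       have hA : u ^ 3 = 1 := by first | exact e0 | exact e1 | exact e2
       have hB : u ^ 3 = -2 := by first | exact e0 | exact e1 | exact e2
       rw [hA] at hB
       norm_num at hB)

lemma within : ∀ t : Fin 3, ∀ a b a' b' : Fin 3, ∀ u : ℂ,
    (∀ i, u * v t a' b' i = v t a b i) → a = a' ∧ b = b' := by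
  refine fin3 ?_ ?_ ?_ <;> intro a b a' b' u hc <;>
    (have h0 := hc 0
     have h1 := hc 1
     have h2 := hc 2
     simp only [v, Matrix.cons_val_zero, Matrix.cons_val_one, Matrix.head_cons,
       Matrix.cons_val_two, Matrix.tail_cons, mul_one] at h0 h1 h2)
  · rw [h0, one_mul] at h1 h2
    exact ⟨(pow_eq h1).symm, (pow_eq (mul_left_cancel₀ hγ0 h2)).symm⟩
  · rw [h1, one_mul] at h0 h2
    exact ⟨(pow_eq (mul_left_cancel₀ hγ0 h0)).symm, (pow_eq h2).symm⟩
  · rw [h0, one_mul] at h1 h2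
    exact ⟨(pow_eq (mul_left_cancel₀ hγ0 h1)).symm, (pow_eq h2).symm⟩

def F : Fin 3 × Fin 3 × Fin 3 → P2 := fun p =>
  Projectivization.mk ℂ (v p.1 p.2.1 p.2.2) (hvne _ _ _)

lemma Finj : Function.Injective F := by
  rintro ⟨t, a, b⟩ ⟨t', a', b'⟩ h
  obtain ⟨u, hu⟩ := (Projectivization.mk_eq_mk_iff ℂ _ _ _ _).1 h
  have hc : ∀ i, (u : ℂ) * v t' a' b' i = v t a b i := fun i => by
    have := congrFun hu i
    simpa [Units.smul_def] using this
  have hc3 : ∀ i, (u : ℂ) ^ 3 * s t' i = s t i := fun i => by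
    calc (u : ℂ) ^ 3 * s t' i = ((u : ℂ) * v t' a' b' i) ^ 3 := by
          rw [mul_pow, hcube]
      _ = (v t a b i) ^ 3 := by rw [hc i]
      _ = s t i := hcube a b t i
  have ht : t = t' := cross t t' u hc3
  subst ht
  obtain ⟨ha, hb⟩ := within t a b a' b' u hc
  rw [ha, hb]

lemma eq_F {t a b : Fin 3} {P : P2} (c : ℂ) (h : ∀ i, P.rep i = c * v t a b i) :
    P = F (t, a, b) := by
  rw [← Projectivization.mk_rep P]
  show Projectivization.mk ℂ P.rep P.rep_nonzero = Projectivization.mk ℂ (v t a b) (hvne t a b)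
  rw [Projectivization.mk_eq_mk_iff']
  exact ⟨c, funext fun i => by rw [Pi.smul_apply, smul_eq_mul, ← h i]⟩

lemma root_exists {w c : ℂ} (hc : c ≠ 0) (h : w ^ 3 = c ^ 3) :
    ∃ b : Fin 3, c * ω ^ ((b : Fin 3) : ℕ) = w := by
  have h1 : (w * c⁻¹) ^ 3 = 1 := by
    rw [mul_pow, inv_pow, h]
    exact mul_inv_cancel₀ (pow_ne_zero _ hc)
  obtain ⟨i, hi, hieq⟩ := hω.eq_pow_of_pow_eq_one h1
  refine ⟨⟨i, hi⟩, ?_⟩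
  show c * ω ^ i = w
  rw [hieq]
  field_simp

end Sext

open Sext in
/-- The common zero locus in `ℙ²(ℂ)` of the Fermat cubic `x³+y³+z³` and of its second
Hessian `(x³-y³)(y³-z³)(z³-x³)` — the set of sextactic points — has exactly 27 points. -/
theorem sextactic_points_card :
    {P : P2 | P.rep 0 ^ 3 + P.rep 1 ^ 3 + P.rep 2 ^ 3 = 0 ∧
      (P.rep 0 ^ 3 - P.rep 1 ^ 3) * (P.rep 1 ^ 3 - P.rep 2 ^ 3) *
        (P.rep 2 ^ 3 - P.rep 0 ^ 3) = 0}.ncard = 27 := by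
  have hSeq : {P : P2 | P.rep 0 ^ 3 + P.rep 1 ^ 3 + P.rep 2 ^ 3 = 0 ∧
      (P.rep 0 ^ 3 - P.rep 1 ^ 3) * (P.rep 1 ^ 3 - P.rep 2 ^ 3) *
        (P.rep 2 ^ 3 - P.rep 0 ^ 3) = 0} = Set.range F := by
    ext P
    simp only [Set.mem_setOf_eq, Set.mem_range]
    constructor
    · rintro ⟨hsum, hprod⟩
      set x := P.rep 0 with hx_def
      set y := P.rep 1 with hy_def
      set z := P.rep 2 with hz_def
      have hne : ¬(x = 0 ∧ y = 0 ∧ z = 0) := by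
        rintro ⟨h0, h1, h2⟩
        exact P.rep_nonzero (funext (fin3 h0 h1 h2))
      rcases mul_eq_zero.1 hprod with h12 | h3
      · rcases mul_eq_zero.1 h12 with h1 | h2
        · -- x³ = y³, z³ = -2x³ : type 0
          have hxy : y ^ 3 = x ^ 3 := by linear_combination -h1
          have hx : x ≠ 0 := by
            intro h0
            refine hne ⟨h0, ?_, ?_⟩
            · have : y ^ 3 = 0 := by rw [hxy, h0]; ring
              exact pow_eq_zero_iff (by norm_num) |>.1 this
            · have hx3 : x ^ 3 = 0 := by rw [h0]; ring
              have : z ^ 3 = 0 := by linear_combination hsum - hxy - 2 * hx3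
              exact pow_eq_zero_iff (by norm_num) |>.1 this
          obtain ⟨a, ha⟩ := root_exists hx hxy
          have hz3 : z ^ 3 = (x * γ) ^ 3 := by
            rw [mul_pow, hγ3]
            linear_combination hsum + h1
          obtain ⟨b, hb⟩ := root_exists (mul_ne_zero hx hγ0) hz3
          refine ⟨(0, a, b), (eq_F x ?_).symm⟩
          refine fin3 ?_ ?_ ?_
          · simp [v, hx_def]
          · simpa [v] using ha.symm
          · simp only [v, Matrix.cons_val_zero, Matrix.cons_val_one, Matrix.head_cons,
              Matrix.cons_val_two, Matrix.tail_cons]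
            rw [← mul_assoc]
            exact hb.symm
        · -- y³ = z³, x³ = -2y³ : type 1
          have hyz : z ^ 3 = y ^ 3 := by linear_combination -h2
          have hy : y ≠ 0 := by
            intro h0
            refine hne ⟨?_, h0, ?_⟩
            · have : x ^ 3 = 0 := by
                have hy3 : y ^ 3 = 0 := by rw [h0]; ring
                linear_combination hsum - hyz - 2 * hy3
              exact pow_eq_zero_iff (by norm_num) |>.1 this
            · have : z ^ 3 = 0 := by rw [hyz, h0]; ring
              exact pow_eq_zero_iff (by norm_num) |>.1 this
          have hx3 : x ^ 3 = (y * γ) ^ 3 := by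
            rw [mul_pow, hγ3]
            linear_combination hsum + h2
          obtain ⟨a, ha⟩ := root_exists (mul_ne_zero hy hγ0) hx3
          obtain ⟨b, hb⟩ := root_exists hy hyz
          refine ⟨(1, a, b), (eq_F y ?_).symm⟩
          refine fin3 ?_ ?_ ?_
          · simp only [v, Matrix.cons_val_zero, Matrix.cons_val_one, Matrix.head_cons,
              Matrix.cons_val_two, Matrix.tail_cons]
            rw [← mul_assoc]
            exact ha.symm
          · simp [v, hy_def]
          · simpa [v] using hb.symm
      · -- z³ = x³, y³ = -2x³ : type 2
        have hzx : z ^ 3 = x ^ 3 := by linear_combination h3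
        have hx : x ≠ 0 := by
          intro h0
          refine hne ⟨h0, ?_, ?_⟩
          · have : y ^ 3 = 0 := by
              have hx3 : x ^ 3 = 0 := by rw [h0]; ring
              linear_combination hsum - hzx - 2 * hx3
            exact pow_eq_zero_iff (by norm_num) |>.1 this
          · have : z ^ 3 = 0 := by rw [hzx, h0]; ring
            exact pow_eq_zero_iff (by norm_num) |>.1 this
        have hy3 : y ^ 3 = (x * γ) ^ 3 := by
          rw [mul_pow, hγ3]
          linear_combination hsum - h3
        obtain ⟨a, ha⟩ := root_exists (mul_ne_zero hx hγ0) hy3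
        obtain ⟨b, hb⟩ := root_exists hx hzx
        refine ⟨(2, a, b), (eq_F x ?_).symm⟩
        refine fin3 ?_ ?_ ?_
        · simp [v, hx_def]
        · simp only [v, Matrix.cons_val_zero, Matrix.cons_val_one, Matrix.head_cons,
            Matrix.cons_val_two, Matrix.tail_cons]
          rw [← mul_assoc]
          exact ha.symm
        · simpa [v] using hb.symm
    · rintro ⟨⟨t, a, b⟩, rfl⟩
      obtain ⟨u, hu⟩ := Projectivization.exists_smul_eq_mk_rep ℂ (v t a b) (hvne t a b)
      have hrep : ∀ i, (F (t, a, b)).rep i = (u : ℂ) * v t a b i := fun i => by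
        rw [show (F (t, a, b)).rep = (Projectivization.mk ℂ (v t a b) (hvne t a b)).rep from rfl,
          ← hu]
        simp [Units.smul_def]
      have h3 : ∀ i, (F (t, a, b)).rep i ^ 3 = (u : ℂ) ^ 3 * s t i := fun i => by
        rw [hrep, mul_pow, hcube]
      constructor
      · rw [h3 0, h3 1, h3 2]
        linear_combination (u : ℂ) ^ 3 * ssum t
      · rw [h3 0, h3 1, h3 2]
        linear_combination ((u : ℂ) ^ 3) ^ 3 * sprod t
  rw [hSeq, ← Nat.card_coe_set_eq, Nat.card_range_of_injective Finj]
  simp [Nat.card_eq_fintype_card]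
end
end
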